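/- arXiv:2511.08256 — 4 statements merged into one kernel-verified Lean document; each statement's English description precedes it below -/
import Mathlib

section
/- Let σ ≥ 1/√2 and δ = 2 + σ + 1/(2σ). For every real g with σ < g and for all real numbers a, b with a + b = g, a ≥ b ≥ 0, and a ≤ σ: (1+a)² + 2(g−a) + (g−a)² ≤ 2g + 1 + σ² + (g−σ)². -/
theorem stmt_4 (σ : ℝ) (hσ : σ ≥ 1 / Real.sqrt 2) (δ : ℝ) (hδ : δ = 2 + σ + 1 / (2 * σ))
    (g a b : ℝ) (hg : σ < g) (hab : a + b = g) (hba : a ≥ b) (hb : b ≥ 0) (ha : a ≤ σ) :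
    (1 + a) ^ 2 + 2 * (g - a) + (g - a) ^ 2 ≤ 2 * g + 1 + σ ^ 2 + (g - σ) ^ 2 := by nlinarith [sq_nonneg (σ - a), sq_nonneg (a - b)]
end

section
/- Let σ ≥ 1/√2 and δ = 2 + σ + 1/(2σ). Every σ-separable ²graph G with g := v̄(G) − 1 ≥ σ + 1/(2σ) satisfies ē(G) ≤ δg < δ·v̄(G). -/
/-- A ²graph on a vertex universe `α`: a set of vertices together with a set of
ordered pairs of vertices as edges. -/
structure TwoGraph (α : Type*) where
  verts : Set α
  edges : Set (α × α)
  edges_sub : edges ⊆ verts ×ˢ verts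

namespace TwoGraph

variable {α : Type*}

/-- Normalized vertex number `v̄(G) = |V(G)|/k`. -/
noncomputable def vbar (k : ℕ) (G : TwoGraph α) : ℝ := (G.verts.ncard : ℝ) / k

/-- Normalized edge number `ē(G) = |E(G)|/k²`. -/
noncomputable def ebar (k : ℕ) (G : TwoGraph α) : ℝ := (G.edges.ncard : ℝ) / k ^ 2

/-- `C` is a sub²graph of `G`. -/
def IsSub (C G : TwoGraph α) : Prop := C.verts ⊆ G.verts ∧ C.edges ⊆ G.edges

/-- `C` is an induced sub²graph of `G`. -/
def IsInduced (C G : TwoGraph α) : Prop :=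
  C.verts ⊆ G.verts ∧ C.edges = G.edges ∩ (C.verts ×ˢ C.verts)

/-- `(A, B)` is a separation of `G` (relative to the fixed `k`). -/
def IsSeparation (k : ℕ) (G A B : TwoGraph α) : Prop :=
  IsInduced A G ∧ IsInduced B G ∧ A.verts ≠ G.verts ∧ B.verts ≠ G.verts ∧
    A.verts ∪ B.verts = G.verts ∧ A.edges ∪ B.edges = G.edges ∧
    (A.verts ∩ B.verts).ncard = k

/-- `G` is σ-separable: every sub²graph `C` with `v̄(C) > 1 + σ` has a separation. -/
def Separable (k : ℕ) (σ : ℝ) (G : TwoGraph α) : Prop :=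
  ∀ C : TwoGraph α, IsSub C G → 1 + σ < vbar k C → ∃ A B, IsSeparation k C A B

end TwoGraph


noncomputable def Bnd (σ t g : ℝ) : ℝ :=
  if g ≤ σ then (1+g)^2 else if g < σ + t then 1+2*g+σ^2+(g-σ)^2 else (2+σ+t)*g

lemma key (σ t x y eG eA eB : ℝ) (hσ0 : 0 < σ) (ht0 : 0 < t) (ht : 2*σ*t = 1) (htσ : t ≤ σ)
    (hx : 0 ≤ x) (hxy : x ≤ y) (hg : σ < x + y)
    (h1 : eG ≤ eB + ((1+x)^2 - 1)) (h2 : eG ≤ eA + eB)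
    (hA : eA ≤ Bnd σ t x) (hB : eB ≤ Bnd σ t y) : eG ≤ Bnd σ t (x+y) := by
  have hy : 0 ≤ y := le_trans hx hxy
  by_cases hxθ : σ + t ≤ x
  · have hyθ : σ + t ≤ y := le_trans hxθ hxy
    rw [Bnd, if_neg (by push_neg; linarith), if_neg (by push_neg; linarith)]
    rw [Bnd, if_neg (by push_neg; linarith), if_neg (by push_neg; linarith)] at hA
    rw [Bnd, if_neg (by push_neg; linarith), if_neg (by push_neg; linarith)] at hB
    nlinarith
  · push_neg at hxθ
    by_cases hgmid : x + y < σ + t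
    · rw [Bnd, if_neg (not_le.2 hg), if_pos hgmid]
      by_cases hyσ : y ≤ σ
      · rw [Bnd, if_pos hyσ] at hB
        nlinarith [mul_nonneg (by linarith : (0:ℝ) ≤ σ - x) (by linarith : (0:ℝ) ≤ σ - y)]
      · push_neg at hyσ
        rw [Bnd, if_neg (not_le.2 hyσ), if_pos (by linarith : y < σ + t)] at hB
        nlinarith [mul_nonneg hx (by linarith : (0:ℝ) ≤ y - σ)]
    · push_neg at hgmid
      rw [Bnd, if_neg (not_le.2 hg), if_neg (not_lt.2 hgmid)]
      by_cases hyθ : σ + t ≤ y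
      · rw [Bnd, if_neg (by push_neg; linarith), if_neg (not_lt.2 hyθ)] at hB
        nlinarith [mul_nonneg hx (by linarith : (0:ℝ) ≤ σ + t - x)]
      · push_neg at hyθ
        by_cases hyσ : y ≤ σ
        · have hxt : t ≤ x := by linarith
          rw [Bnd, if_pos hyσ] at hB
          nlinarith [mul_nonneg (by linarith : (0:ℝ) ≤ σ - x) (by linarith : (0:ℝ) ≤ x - t),
            mul_nonneg (by linarith : (0:ℝ) ≤ σ - y) (by linarith : (0:ℝ) ≤ y - t), ht]
        · push_neg at hyσ
          rw [Bnd, if_neg (not_le.2 hyσ), if_pos hyθ] at hB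
          rcases le_total x t with hxt | hxt
          · nlinarith [mul_nonneg (by linarith : (0:ℝ) ≤ σ + t - y) (by linarith : (0:ℝ) ≤ x + y - (σ + t)),
              mul_nonneg hx (by linarith : (0:ℝ) ≤ t - x), ht]
          · rcases le_total x σ with hxσ | hxσ
            · nlinarith [mul_nonneg (by linarith : (0:ℝ) ≤ σ - x) (by linarith : (0:ℝ) ≤ x - t),
                mul_nonneg (by linarith : (0:ℝ) ≤ y - σ) (by linarith : (0:ℝ) ≤ 2*σ + t - y), ht]
            · nlinarith [mul_nonneg (by linarith : (0:ℝ) ≤ y - x) (by linarith : (0:ℝ) ≤ x - t),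
                mul_nonneg (by linarith : (0:ℝ) ≤ y - σ) (by linarith : (0:ℝ) ≤ 2*(σ+t) - x - y), ht]

namespace TwoGraph
variable {α : Type} [Fintype α]

set_option linter.unusedSectionVars false

lemma aux_ncard_sq (s : Set α) : (s ×ˢ s).ncard = s.ncard * s.ncard := by
  rw [← Nat.card_coe_set_eq, Nat.card_congr (Equiv.Set.prod s s), Nat.card_prod,
    Nat.card_coe_set_eq]

lemma aux_ncard_sq' (s : Set (α × α)) (t : Set α) (h : s ⊆ t ×ˢ t) :
    s.ncard ≤ t.ncard * t.ncard := by
  rw [← aux_ncard_sq]; exact Set.ncard_le_ncard h (Set.toFinite _)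

lemma ebar_le_sq (k : ℕ) (hk : 0 < k) (G : TwoGraph α) : ebar k G ≤ (vbar k G)^2 := by
  have hk2 : (0:ℝ) < (k:ℝ)^2 := by positivity
  rw [ebar, vbar, div_pow, div_le_div_iff₀ hk2 hk2]
  have := aux_ncard_sq' G.edges G.verts G.edges_sub
  have : (G.edges.ncard : ℝ) ≤ (G.verts.ncard:ℝ) * G.verts.ncard := by exact_mod_cast this
  nlinarith [sq_nonneg ((k:ℝ))]

lemma sep_symm {k : ℕ} {G A B : TwoGraph α} (h : IsSeparation k G A B) :
    IsSeparation k G B A := by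
  obtain ⟨h1, h2, h3, h4, h5, h6, h7⟩ := h
  exact ⟨h2, h1, h4, h3, by rw [Set.union_comm]; exact h5, by rw [Set.union_comm]; exact h6,
    by rw [Set.inter_comm]; exact h7⟩

lemma sep_facts (k : ℕ) (hk : 0 < k) {G A B : TwoGraph α} (h : IsSeparation k G A B) :
    1 ≤ vbar k A ∧ vbar k A + vbar k B = vbar k G + 1 ∧
    A.verts.ncard < G.verts.ncard ∧
    ebar k G ≤ ebar k B + ((vbar k A)^2 - 1) ∧
    ebar k G ≤ ebar k A + ebar k B := by
  obtain ⟨hIA, hIB, hAne, hBne, hVuni, hEuni, hSk⟩ := h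
  have hk0 : (0:ℝ) < k := by exact_mod_cast hk
  have hk2 : (0:ℝ) < (k:ℝ)^2 := by positivity
  set S := A.verts ∩ B.verts with hS
  have hka : k ≤ A.verts.ncard := by
    rw [← hSk]; exact Set.ncard_le_ncard Set.inter_subset_left (Set.toFinite _)
  have hsum : A.verts.ncard + B.verts.ncard = G.verts.ncard + k := by
    have := Set.ncard_union_add_ncard_inter A.verts B.verts (Set.toFinite _) (Set.toFinite _)
    rw [hVuni, hSk] at this; omega
  have hlt : A.verts.ncard < G.verts.ncard :=
    Set.ncard_lt_ncard (HasSubset.Subset.ssubset_of_ne hIA.1 hAne) (Set.toFinite _)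
  have hediff : A.edges \ B.edges ⊆ (A.verts ×ˢ A.verts) \ (S ×ˢ S) := by
    rintro e ⟨heA, heB⟩
    refine ⟨A.edges_sub heA, fun heS => heB ?_⟩
    rw [hIB.2]
    have heG : e ∈ G.edges := by
      rw [hIA.2] at heA; exact heA.1
    exact ⟨heG, Set.prod_mono Set.inter_subset_right Set.inter_subset_right heS⟩
  have hprodsub : (S ×ˢ S) ⊆ A.verts ×ˢ A.verts :=
    Set.prod_mono Set.inter_subset_left Set.inter_subset_left
  have hN : G.edges.ncard + k*k ≤ B.edges.ncard + A.verts.ncard * A.verts.ncard := by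
    have e1 : G.edges.ncard ≤ (B.edges ∪ (A.edges \ B.edges)).ncard := by
      apply Set.ncard_le_ncard _ (Set.toFinite _)
      rw [Set.union_diff_self, Set.union_comm, hEuni]
    have e2 : (B.edges ∪ (A.edges \ B.edges)).ncard ≤ B.edges.ncard + (A.edges \ B.edges).ncard :=
      Set.ncard_union_le _ _
    have e3 : (A.edges \ B.edges).ncard ≤ ((A.verts ×ˢ A.verts) \ (S ×ˢ S)).ncard :=
      Set.ncard_le_ncard hediff (Set.toFinite _)
    have e4 : ((A.verts ×ˢ A.verts) \ (S ×ˢ S)).ncard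
        = A.verts.ncard * A.verts.ncard - k*k := by
      rw [Set.ncard_diff hprodsub (Set.toFinite _), aux_ncard_sq, aux_ncard_sq, hSk]
    have e5 : k*k ≤ A.verts.ncard * A.verts.ncard := Nat.mul_le_mul hka hka
    omega
  have hEuni' : G.edges.ncard ≤ A.edges.ncard + B.edges.ncard := by
    rw [← hEuni]; exact Set.ncard_union_le _ _
  refine ⟨?_, ?_, hlt, ?_, ?_⟩
  · rw [vbar, le_div_iff₀ hk0]; norm_num; exact_mod_cast hka
  · have hsR : (A.verts.ncard:ℝ) + B.verts.ncard = G.verts.ncard + k := by exact_mod_cast hsum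
    rw [vbar, vbar, vbar, ← add_div, hsR, add_div, div_self (ne_of_gt hk0)]
  · have hNR : (G.edges.ncard:ℝ) + (k:ℝ)*k ≤ (B.edges.ncard:ℝ) + (A.verts.ncard:ℝ) * A.verts.ncard := by
      exact_mod_cast hN
    have hrw : ebar k B + ((vbar k A)^2 - 1)
        = ((B.edges.ncard:ℝ) + ((A.verts.ncard:ℝ)^2 - (k:ℝ)^2))/(k:ℝ)^2 := by
      rw [ebar, vbar]; field_simp
    rw [hrw, ebar]
    gcongr
    nlinarith [hNR]
  · have hrw : ebar k A + ebar k B = ((A.edges.ncard:ℝ) + (B.edges.ncard:ℝ))/(k:ℝ)^2 := by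
      rw [ebar, ebar, ← add_div]
    rw [hrw, ebar]
    gcongr
    exact_mod_cast hEuni'

lemma sub_trans {C B G : TwoGraph α} (h1 : IsSub C B) (h2 : IsSub B G) : IsSub C G :=
  ⟨h1.1.trans h2.1, h1.2.trans h2.2⟩

lemma induced_isSub {A G : TwoGraph α} (h : IsInduced A G) : IsSub A G :=
  ⟨h.1, by rw [h.2]; exact Set.inter_subset_left⟩

lemma small_case (k : ℕ) (hk : 0 < k) (σ t : ℝ) (G : TwoGraph α)
    (hg : vbar k G - 1 ≤ σ) : ebar k G ≤ Bnd σ t (vbar k G - 1) := by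
  rw [Bnd, if_pos hg]
  have := ebar_le_sq k hk G
  calc ebar k G ≤ (vbar k G)^2 := this
    _ = (1 + (vbar k G - 1))^2 := by ring

/-- One inductive step, for the orientation with `vbar A ≤ vbar B`. -/
lemma step (k : ℕ) (hk : 0 < k) (σ t : ℝ) (hσ0 : 0 < σ) (ht0 : 0 < t) (ht : 2*σ*t = 1)
    (htσ : t ≤ σ) {G A B : TwoGraph α} (hSep : IsSeparation k G A B)
    (hA : ebar k A ≤ Bnd σ t (vbar k A - 1)) (hB : ebar k B ≤ Bnd σ t (vbar k B - 1))
    (hxy : vbar k A ≤ vbar k B) (hg : σ < vbar k G - 1) :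
    ebar k G ≤ Bnd σ t (vbar k G - 1) := by
  obtain ⟨h1A, hsum, _, hpair, huni⟩ := sep_facts k hk hSep
  have hsum' : (vbar k A - 1) + (vbar k B - 1) = vbar k G - 1 := by linarith
  rw [← hsum']
  apply key σ t _ _ _ _ _ hσ0 ht0 ht htσ (by linarith) (by linarith) (by linarith)
    ?_ huni hA hB
  calc ebar k G ≤ ebar k B + ((vbar k A)^2 - 1) := hpair
    _ = ebar k B + ((1 + (vbar k A - 1))^2 - 1) := by ring

lemma main (k : ℕ) (hk : 0 < k) (σ t : ℝ) (hσ0 : 0 < σ) (ht0 : 0 < t) (ht : 2*σ*t = 1)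
    (htσ : t ≤ σ) : ∀ n : ℕ, ∀ G : TwoGraph α, G.verts.ncard ≤ n → Separable k σ G →
    ebar k G ≤ Bnd σ t (vbar k G - 1) := by
  intro n
  induction n with
  | zero =>
    intro G hn _
    apply small_case k hk
    have : G.verts.ncard = 0 := Nat.le_zero.1 hn
    rw [vbar, this]
    simp only [Nat.cast_zero, zero_div]
    linarith
  | succ n ih =>
    intro G hn hsep
    by_cases hgσ : vbar k G - 1 ≤ σ
    · exact small_case k hk σ t G hgσ
    · push_neg at hgσ
      obtain ⟨A, B, hSep⟩ := hsep G ⟨subset_rfl, subset_rfl⟩ (by linarith)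
      have hsub : ∀ {X : TwoGraph α}, IsInduced X G → Separable k σ X := by
        intro X hX C hC hv
        exact hsep C (sub_trans hC (induced_isSub hX)) hv
      have hAcard := (sep_facts k hk hSep).2.2.1
      have hBcard := (sep_facts k hk (sep_symm hSep)).2.2.1
      have hIHA : ebar k A ≤ Bnd σ t (vbar k A - 1) :=
        ih A (by omega) (hsub hSep.1)
      have hIHB : ebar k B ≤ Bnd σ t (vbar k B - 1) :=
        ih B (by omega) (hsub hSep.2.1)
      rcases le_total (vbar k A) (vbar k B) with hc | hc
      · exact step k hk σ t hσ0 ht0 ht htσ hSep hIHA hIHB hc hgσ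
      · exact step k hk σ t hσ0 ht0 ht htσ (sep_symm hSep) hIHB hIHA hc hgσ

end TwoGraph

theorem stmt_10 (k : ℕ) (hk : 0 < k) (σ : ℝ) (hσ : σ ≥ 1 / Real.sqrt 2) (δ : ℝ)
    (hδ : δ = 2 + σ + 1 / (2 * σ)) (α : Type) [Fintype α] (G : TwoGraph α)
    (hsep : TwoGraph.Separable k σ G)
    (hg : TwoGraph.vbar k G - 1 ≥ σ + 1 / (2 * σ)) :
    TwoGraph.ebar k G ≤ δ * (TwoGraph.vbar k G - 1) ∧
      δ * (TwoGraph.vbar k G - 1) < δ * TwoGraph.vbar k G := by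
  have hs2 : (0:ℝ) < Real.sqrt 2 := Real.sqrt_pos.2 (by norm_num)
  have hσ0 : 0 < σ := lt_of_lt_of_le (by positivity) hσ
  have hσsq : 1 ≤ 2*σ^2 := by
    have h1 : (1 / Real.sqrt 2)^2 ≤ σ^2 := by
      apply pow_le_pow_left₀ (by positivity) hσ
    have h2 : (1 / Real.sqrt 2)^2 = 1/2 := by
      rw [div_pow, Real.sq_sqrt (by norm_num : (2:ℝ) ≥ 0)]
      norm_num
    rw [h2] at h1; linarith
  set t : ℝ := 1 / (2*σ) with htdef
  have ht0 : 0 < t := by positivity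
  have ht : 2*σ*t = 1 := by rw [htdef]; field_simp
  have htσ : t ≤ σ := by
    rw [htdef, div_le_iff₀ (by positivity)]
    nlinarith
  have hmain := TwoGraph.main k hk σ t hσ0 ht0 ht htσ G.verts.ncard G le_rfl hsep
  have hbnd : Bnd σ t (TwoGraph.vbar k G - 1) = (2+σ+t) * (TwoGraph.vbar k G - 1) := by
    rw [Bnd, if_neg (by push_neg; nlinarith), if_neg (by push_neg; linarith)]
  constructor
  · rw [hbnd] at hmain
    calc TwoGraph.ebar k G ≤ (2+σ+t) * (TwoGraph.vbar k G - 1) := hmain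
      _ = δ * (TwoGraph.vbar k G - 1) := by rw [hδ, htdef]
  · have hδ0 : 0 < δ := by rw [hδ]; positivity
    nlinarith
end

section
/- Let z⃗ ∈ ℝˡ, z ≥ ‖z⃗‖ (Euclidean norm), and τ ∈ [0, z/2]. Consider maximizing f(x, x⃗) = x² − ‖x⃗‖² + (z−x)² − ‖z⃗−x⃗‖² over x ∈ [τ, z/2] and x⃗ ∈ ℝˡ with ‖x⃗‖ ≤ x and ‖z⃗−x⃗‖ ≤ z−x. Then the maximum is attained at x = τ with x⃗ = 0⃗ if z⃗ = 0⃗, and at x = τ with x⃗ = min(1/2, τ/‖z⃗‖)·z⃗ otherwise. -/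
set_option maxHeartbeats 1600000 in
theorem stmt_14 (l : ℕ) (zv : EuclideanSpace ℝ (Fin l)) (z : ℝ) (hz : ‖zv‖ ≤ z)
    (τ : ℝ) (hτ0 : 0 ≤ τ) (hτ : τ ≤ z / 2) :
    ∃ xstar : EuclideanSpace ℝ (Fin l),
      (zv = 0 → xstar = 0) ∧
      (zv ≠ 0 → xstar = min (1 / 2) (τ / ‖zv‖) • zv) ∧
      ‖xstar‖ ≤ τ ∧ ‖zv - xstar‖ ≤ z - τ ∧
      ∀ (x : ℝ) (xv : EuclideanSpace ℝ (Fin l)),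
        τ ≤ x → x ≤ z / 2 → ‖xv‖ ≤ x → ‖zv - xv‖ ≤ z - x →
          x ^ 2 - ‖xv‖ ^ 2 + (z - x) ^ 2 - ‖zv - xv‖ ^ 2 ≤
            τ ^ 2 - ‖xstar‖ ^ 2 + (z - τ) ^ 2 - ‖zv - xstar‖ ^ 2 := by
  by_cases hzv : zv = 0
  · subst hzv
    refine ⟨0, fun _ => rfl, fun h => absurd rfl h, by simpa using hτ0, ?_, ?_⟩
    · simpa using by linarith [norm_nonneg (0 : EuclideanSpace ℝ (Fin l))]
    · intro x xv hx1 hx2 ha hb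
      simp only [norm_zero, zero_sub, norm_neg, sub_zero]
      simp only [zero_sub, norm_neg] at hb
      nlinarith [sq_nonneg ‖xv‖, norm_nonneg xv, mul_nonneg (sub_nonneg.2 hx1)
        (show (0:ℝ) ≤ z - τ - x by linarith)]
  · set c := ‖zv‖ with hc_def
    have hc : 0 < c := norm_pos_iff.mpr hzv
    set r := min (1 / 2 : ℝ) (τ / c) with hr_def
    have hr0 : 0 ≤ r := le_min (by norm_num) (div_nonneg hτ0 hc.le)
    have hr1 : r ≤ 1 / 2 := min_le_left _ _
    have hnx : ‖r • zv‖ = r * c := by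
      rw [norm_smul, Real.norm_eq_abs, abs_of_nonneg hr0]
    have hnz : ‖zv - r • zv‖ = (1 - r) * c := by
      have h1 : zv - r • zv = (1 - r) • zv := by rw [sub_smul, one_smul]
      rw [h1, norm_smul, Real.norm_eq_abs, abs_of_nonneg (by linarith)]
    have hs : r * c = min (c / 2) τ := by
      rcases le_total τ (c / 2) with h | h
      · have h' : τ / c ≤ 1 / 2 := by rw [div_le_iff₀ hc]; linarith
        rw [hr_def, min_eq_right h', div_mul_cancel₀ _ hc.ne', min_eq_right h]
      · have h' : (1 / 2 : ℝ) ≤ τ / c := by rw [le_div_iff₀ hc]; linarith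
        rw [hr_def, min_eq_left h', min_eq_left h]; ring
    refine ⟨r • zv, fun h => absurd h hzv, fun _ => rfl, ?_, ?_, ?_⟩
    · rw [hnx, hs]; exact min_le_right _ _
    · rw [hnz, show (1 - r) * c = c - r * c by ring, hs]
      rcases le_total τ (c / 2) with h | h
      · rw [min_eq_right h]; linarith
      · rw [min_eq_left h]; linarith
    · intro x xv hx1 hx2 ha hb
      have htri : c - ‖xv‖ ≤ ‖zv - xv‖ := norm_sub_norm_le zv xv
      have ha0 : (0:ℝ) ≤ ‖xv‖ := norm_nonneg _
      have hb0 : (0:ℝ) ≤ ‖zv - xv‖ := norm_nonneg _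
      set a := ‖xv‖
      set b := ‖zv - xv‖
      rw [hnx, hnz, show (1 - r) * c = c - r * c by ring, hs]
      have hg : x ^ 2 + (z - x) ^ 2 ≤ τ ^ 2 + (z - τ) ^ 2 := by
        nlinarith [mul_nonneg (sub_nonneg.2 hx1) (show (0:ℝ) ≤ z - τ - x by linarith)]
      rcases le_total τ (c / 2) with h | h
      · rw [min_eq_right h]
        rcases le_total a c with hac | hac
        · have hbb : (c - a) ^ 2 ≤ b ^ 2 := by nlinarith
          rcases le_total x (c / 2) with hxc | hxc
          · -- a ≤ x, x ≤ c/2 : f ≤ φ(x) ≤ φ(τ)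
            have h1 : x ^ 2 - a ^ 2 + (z - x) ^ 2 - (c - a) ^ 2 ≤
                (z - x) ^ 2 - (c - x) ^ 2 := by
              nlinarith [mul_nonneg (sub_nonneg.2 ha)
                (show (0:ℝ) ≤ c - x - a by linarith)]
            have h2 : (z - x) ^ 2 - (c - x) ^ 2 ≤ (z - τ) ^ 2 - (c - τ) ^ 2 := by
              nlinarith [mul_nonneg (sub_nonneg.2 hx1)
                (show (0:ℝ) ≤ z - c by linarith)]
            linarith
          · -- x ≥ c/2 : f ≤ g(x) - c²/2 ≤ g(c/2) - c²/2 = φ(c/2) ≤ φ(τ)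
            have h1 : c ^ 2 / 2 ≤ a ^ 2 + (c - a) ^ 2 := by
              nlinarith [sq_nonneg (2 * a - c)]
            have h2 : x ^ 2 + (z - x) ^ 2 ≤ (c / 2) ^ 2 + (z - c / 2) ^ 2 := by
              nlinarith [mul_nonneg (show (0:ℝ) ≤ x - c / 2 by linarith)
                (show (0:ℝ) ≤ z - c / 2 - x by linarith)]
            have h3 : (z - c / 2) ^ 2 - (c - c / 2) ^ 2 ≤
                (z - τ) ^ 2 - (c - τ) ^ 2 := by
              nlinarith [mul_nonneg (show (0:ℝ) ≤ c / 2 - τ by linarith)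
                (show (0:ℝ) ≤ z - c by linarith)]
            nlinarith
        · -- a ≥ c
          have h1 : c ^ 2 ≤ a ^ 2 := by nlinarith
          have h2 : τ ^ 2 + (c - τ) ^ 2 ≤ c ^ 2 := by
            nlinarith [mul_nonneg hτ0 (show (0:ℝ) ≤ c - τ by linarith)]
          nlinarith [sq_nonneg b]
      · rw [min_eq_left h]
        have h1 : c ^ 2 ≤ 2 * (a ^ 2 + b ^ 2) := by
          nlinarith [sq_nonneg (a - b),
            mul_nonneg (show (0:ℝ) ≤ a + b - c by linarith)
              (show (0:ℝ) ≤ a + b + c by linarith)]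
        nlinarith
end

section
/- Let z⃗ ∈ ℝˡ with z⃗ ≠ 0⃗, z ≥ ‖z⃗‖, and let x ∈ [0, ‖z⃗‖/2]. Then for every x⃗ ∈ ℝˡ with ‖x⃗‖ ≤ x and ‖z⃗−x⃗‖ ≤ z−x, one has x² − ‖x⃗‖² + (z−x)² − ‖z⃗−x⃗‖² ≤ z² − ‖z⃗‖² − 2(z − ‖z⃗‖)·x, with equality for x⃗ = (x/‖z⃗‖)·z⃗. -/
theorem stmt_15 (l : ℕ) (zv : EuclideanSpace ℝ (Fin l)) (hzv : zv ≠ 0) (z : ℝ)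
    (hz : ‖zv‖ ≤ z) (x : ℝ) (hx0 : 0 ≤ x) (hx : x ≤ ‖zv‖ / 2) :
    (∀ xv : EuclideanSpace ℝ (Fin l), ‖xv‖ ≤ x → ‖zv - xv‖ ≤ z - x →
        x ^ 2 - ‖xv‖ ^ 2 + (z - x) ^ 2 - ‖zv - xv‖ ^ 2 ≤
          z ^ 2 - ‖zv‖ ^ 2 - 2 * (z - ‖zv‖) * x) ∧
      x ^ 2 - ‖(x / ‖zv‖) • zv‖ ^ 2 + (z - x) ^ 2 - ‖zv - (x / ‖zv‖) • zv‖ ^ 2 =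
        z ^ 2 - ‖zv‖ ^ 2 - 2 * (z - ‖zv‖) * x := by
  have hn : 0 < ‖zv‖ := norm_pos_iff.mpr hzv
  constructor
  · intro xv hxv hzx
    have h1 : ‖zv‖ - ‖xv‖ ≤ ‖zv - xv‖ := norm_sub_norm_le zv xv
    have h2 : (0:ℝ) ≤ ‖xv‖ := norm_nonneg _
    have h3 : (0:ℝ) ≤ ‖zv - xv‖ := norm_nonneg _
    nlinarith [sq_nonneg (x - ‖xv‖), sq_nonneg (‖zv - xv‖ - (‖zv‖ - ‖xv‖)),
      mul_nonneg (sub_nonneg.mpr hxv) (sub_nonneg.mpr h1)]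
  · have e1 : ‖(x / ‖zv‖) • zv‖ = x := by
      rw [norm_smul, Real.norm_eq_abs, abs_of_nonneg (by positivity)]
      field_simp
    have e2 : zv - (x / ‖zv‖) • zv = (1 - x / ‖zv‖) • zv := by
      rw [sub_smul, one_smul]
    have e3 : ‖zv - (x / ‖zv‖) • zv‖ = ‖zv‖ - x := by
      rw [e2, norm_smul, Real.norm_eq_abs, abs_of_nonneg]
      · field_simp
      · have : x / ‖zv‖ ≤ 1 := by
          rw [div_le_one hn]; linarith
        linarith
    rw [e1, e3]; ring
end
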